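/- Let G be an abelian group, δ > 0, and f, g : G → ℂ with |f(x+y) + f(x−y) − 2·f(x)·g(y)| ≤ δ for all x, y ∈ G. If f is unbounded, then g satisfies g(x+y) + g(x−y) = 2·g(x)·g(y) for all x, y ∈ G. -/

import Mathlib

theorem stmt_15 (G : Type*) [AddCommGroup G] (δ : ℝ) (hδ : 0 < δ) (f g : G → ℂ)
    (h : ∀ x y : G, ‖f (x + y) + f (x - y) - 2 * f x * g y‖ ≤ δ)
    (hf : ∀ M : ℝ, ∃ z : G, M < ‖f z‖) :
    ∀ x y : G, g (x + y) + g (x - y) = 2 * g x * g y := by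
  intro x y
  by_contra hne
  set c := g (x + y) + g (x - y) - 2 * g x * g y with hc
  have hc0 : c ≠ 0 := sub_ne_zero_of_ne hne
  have hcpos : 0 < ‖c‖ := by simpa using hc0
  have subtri : ∀ p q : ℂ, ‖p - q‖ ≤ ‖p‖ + ‖q‖ := fun p q => by
    simpa [sub_eq_add_neg] using norm_add_le p (-q)
  have key : ∀ z : G, ‖f z‖ * ‖c‖ ≤ (2 + ‖g y‖) * δ := by
    intro z
    have A := h (z + x) y
    have B := h (z - x) y
    have C := h z x
    have D := h z (x + y)
    have E := h z (x - y)
    have e1 : z + (x + y) = z + x + y := by abel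
    have e2 : z - (x + y) = z - x - y := by abel
    have e3 : z + (x - y) = z + x - y := by abel
    have e4 : z - (x - y) = z - x + y := by abel
    rw [e1, e2] at D
    rw [e3, e4] at E
    set a := f (z + x + y) + f (z + x - y) - 2 * f (z + x) * g y with ha
    set b := f (z - x + y) + f (z - x - y) - 2 * f (z - x) * g y with hb
    set d := f (z + x + y) + f (z - x - y) - 2 * f z * g (x + y) with hd
    set e := f (z + x - y) + f (z - x + y) - 2 * f z * g (x - y) with he
    set w := f (z + x) + f (z - x) - 2 * f z * g x with hw
    have identity : 2 * f z * c = a + b - d - e + 2 * g y * w := by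
      rw [hc, ha, hb, hd, he, hw]; ring
    have tri : ‖a + b - d - e + 2 * g y * w‖ ≤
        ‖a‖ + ‖b‖ + ‖d‖ + ‖e‖
          + ‖2 * g y * w‖ := by
      calc ‖a + b - d - e + 2 * g y * w‖
          ≤ ‖a + b - d - e‖ + ‖2 * g y * w‖ :=
            norm_add_le _ _
        _ ≤ (‖a + b - d‖ + ‖e‖) + ‖2 * g y * w‖ := by
            gcongr; exact subtri _ _
        _ ≤ ((‖a + b‖ + ‖d‖) + ‖e‖)
              + ‖2 * g y * w‖ := by
            gcongr; exact subtri _ _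
        _ ≤ (((‖a‖ + ‖b‖) + ‖d‖) + ‖e‖)
              + ‖2 * g y * w‖ := by
            gcongr; exact norm_add_le _ _
        _ = _ := by ring
    have hgw : ‖2 * g y * w‖ ≤ 2 * ‖g y‖ * δ := by
      rw [norm_mul, norm_mul]
      simp only [Complex.norm_two]
      have := mul_le_mul_of_nonneg_left C (by positivity : (0:ℝ) ≤ 2 * ‖g y‖)
      calc 2 * ‖g y‖ * ‖w‖
          = 2 * ‖g y‖ * ‖w‖ := rfl
        _ ≤ 2 * ‖g y‖ * δ := by gcongr
    have hbound : ‖2 * f z * c‖ ≤ (4 + 2 * ‖g y‖) * δ := by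
      rw [identity]
      calc ‖a + b - d - e + 2 * g y * w‖
          ≤ ‖a‖ + ‖b‖ + ‖d‖ + ‖e‖
              + ‖2 * g y * w‖ := tri
        _ ≤ δ + δ + δ + δ + 2 * ‖g y‖ * δ := by gcongr
        _ = (4 + 2 * ‖g y‖) * δ := by ring
    have : 2 * (‖f z‖ * ‖c‖) ≤ (4 + 2 * ‖g y‖) * δ := by
      calc 2 * (‖f z‖ * ‖c‖)
          = ‖2 * f z * c‖ := by
            rw [norm_mul, norm_mul, Complex.norm_two]; ring
        _ ≤ _ := hbound
    linarith
  obtain ⟨z, hz⟩ := hf ((2 + ‖g y‖) * δ / ‖c‖)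
  have hz' : (2 + ‖g y‖) * δ < ‖f z‖ * ‖c‖ :=
    (div_lt_iff₀ hcpos).mp hz
  exact absurd (key z) (not_le.mpr hz')
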